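/- In the braid group on n+1 strands (the Artin group of type A_n with standard generators s_1, ..., s_n), the square of the Garside element satisfies Δ[A_n]^2 = (s_1 ⋯ s_{n-1} s_n^2 s_{n-1} ⋯ s_1)(s_2 ⋯ s_{n-1} s_n^2 s_{n-1} ⋯ s_2) ⋯ (s_{n-1} s_n^2 s_{n-1}) s_n^2. -/

import Mathlib

/-- Braid relator `x y x (y x y)⁻¹`. -/
def braidRel {α : Type} (x y : FreeGroup α) : FreeGroup α := x * y * x * (y * x * y)⁻¹

/-- Commutation relator `x y (y x)⁻¹`. -/
def commRel {α : Type} (x y : FreeGroup α) : FreeGroup α := x * y * (y * x)⁻¹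

/-- Relators for the Artin group of type `A_m` on generators `s_1, …, s_m`
(0-based indices `0, …, m-1`). -/
def ArelA (m : ℕ) : Set (FreeGroup (Fin m)) :=
  {r | ∃ i j : Fin m,
    (j.val = i.val + 1 ∧ r = braidRel (FreeGroup.of i) (FreeGroup.of j)) ∨
    (i.val + 2 ≤ j.val ∧ r = commRel (FreeGroup.of i) (FreeGroup.of j))}

/-- The Artin group of type `A_m` (braid group on `m+1` strands). -/
abbrev ArtinA (m : ℕ) := PresentedGroup (ArelA m)

/-- The generator `s_{i+1}` of `A[A_m]` (0-based index `i`; junk value `1` if `i ≥ m`). -/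
def gA (m : ℕ) (i : ℕ) : ArtinA m :=
  if h : i < m then PresentedGroup.of ⟨i, h⟩ else 1

/-- 0-based adjacency in the Coxeter graph `D_n` on vertices `0, …, n-1`
(vertex `i` corresponds to `t_{i+1}`): edges `(i, i+1)` for `i+1 ≤ n-2`
and the edge `(n-3, n-1)`. -/
def adjD (n : ℕ) (i j : ℕ) : Prop :=
  (j = i + 1 ∧ j ≤ n - 2) ∨ (i = n - 3 ∧ j = n - 1)

/-- Relators for the Artin group of type `D_n`: braid relation along each edge,
commutation for non-adjacent pairs. -/
def ArelD (n : ℕ) : Set (FreeGroup (Fin n)) :=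
  {r | ∃ i j : Fin n, i.val < j.val ∧
    ((adjD n i.val j.val ∧ r = braidRel (FreeGroup.of i) (FreeGroup.of j)) ∨
     (¬ adjD n i.val j.val ∧ r = commRel (FreeGroup.of i) (FreeGroup.of j)))}

/-- The Artin group of type `D_n`. -/
abbrev ArtinD (n : ℕ) := PresentedGroup (ArelD n)

/-- The generator `t_{i+1}` of `A[D_n]` (0-based index `i`; junk value `1` if `i ≥ n`). -/
def gD (n : ℕ) (i : ℕ) : ArtinD n :=
  if h : i < n then PresentedGroup.of ⟨i, h⟩ else 1

/-- The word `(s_m ⋯ s_1)(s_m ⋯ s_2) ⋯ (s_m s_{m-1}) s_m` (1-based) evaluated on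
a family `s` of group elements (0-based). This is the Garside element of type `A_m`. -/
def deltaAin {G : Type} [Group G] (m : ℕ) (s : ℕ → G) : G :=
  ((List.range m).map (fun k => ((List.range (m - k)).map (fun j => s (m - 1 - j))).prod)).prod

/-- The Garside element `Δ[A_m]`. -/
def deltaA (m : ℕ) : ArtinA m := deltaAin m (gA m)

/-- The factor `t_{k+1} ⋯ t_{n-2} t_{n-1} t_n t_{n-2} ⋯ t_{k+1}` (1-based) of `Δ[D_n]`,
0-based index `k`. -/
def factorD {G : Type} [Group G] (n : ℕ) (t : ℕ → G) (k : ℕ) : G :=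
  ((List.range (n - 2 - k)).map (fun j => t (k + j))).prod * t (n - 2) * t (n - 1) *
    ((List.range (n - 2 - k)).map (fun j => t (n - 3 - j))).prod

/-- The word giving the Garside element of type `D_n`, evaluated on a family `t`. -/
def deltaDin {G : Type} [Group G] (n : ℕ) (t : ℕ → G) : G :=
  ((List.range (n - 1)).map (factorD n t)).prod

/-- The Garside element `Δ[D_n]`. -/
def deltaD (n : ℕ) : ArtinD n := deltaDin n (gD n)

/-- The Garside element `Δ_Y` of the standard parabolic subgroup of `A[D_n]`
generated by `Y = {t_1, …, t_{n-1}}` (a copy of `A[A_{n-1}]`). -/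
def deltaY (n : ℕ) : ArtinD n := deltaAin (n - 1) (gD n)

/-- `κ = 2` if `n` is odd and `κ = 1` if `n` is even. -/
def kap (n : ℕ) : ℤ := if Odd n then 2 else 1

/-- The central quotient `A[D_n]/Z(A[D_n])`. -/
abbrev AZD (n : ℕ) := ArtinD n ⧸ Subgroup.center (ArtinD n)


namespace GarsideAux

variable {G : Type} [Group G]

/-- `dscW s a b = s (b-1) * s (b-2) * ⋯ * s a` (and `1` if `b ≤ a`). -/
def dscW (s : ℕ → G) (a : ℕ) : ℕ → G
  | 0 => 1
  | b+1 => if a ≤ b then s b * dscW s a b else 1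

/-- `ascW s a b = s a * s (a+1) * ⋯ * s (b-1)` (and `1` if `b ≤ a`). -/
def ascW (s : ℕ → G) (a : ℕ) : ℕ → G
  | 0 => 1
  | b+1 => if a ≤ b then ascW s a b * s b else 1

/-- `DD s m = δ₁ δ₂ ⋯ δ_m` where `δ_k = dscW s 0 k`. -/
def DD (s : ℕ → G) : ℕ → G
  | 0 => 1
  | m+1 => DD s m * dscW s 0 (m+1)

/-- The factor `s_k ⋯ s_{m-2} · s_{m-1}² · s_{m-2} ⋯ s_k` (0-based). -/
def Rfac (s : ℕ → G) (m k : ℕ) : G :=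
  ascW s k (m-1) * s (m-1) * s (m-1) * dscW s k (m-1)

variable (s : ℕ → G)

theorem dscW_nil {a b : ℕ} (h : b ≤ a) : dscW s a b = 1 := by
  cases b with
  | zero => rfl
  | succ b => simp only [dscW, if_neg (by omega : ¬ a ≤ b)]

theorem dscW_peel {a b : ℕ} (h : a ≤ b) : dscW s a (b+1) = s b * dscW s a b := by
  simp only [dscW, if_pos h]

theorem ascW_nil {a b : ℕ} (h : b ≤ a) : ascW s a b = 1 := by
  cases b with
  | zero => rfl
  | succ b => simp only [ascW, if_neg (by omega : ¬ a ≤ b)]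

theorem ascW_peel {a b : ℕ} (h : a ≤ b) : ascW s a (b+1) = ascW s a b * s b := by
  simp only [ascW, if_pos h]

theorem dscW_split (a b : ℕ) : ∀ c, a ≤ b → b ≤ c →
    dscW s a c = dscW s b c * dscW s a b := by
  intro c
  induction c with
  | zero =>
    intro h1 h2
    have hb0 : b = 0 := by omega
    subst hb0
    rw [dscW_nil s (le_refl 0), one_mul]
  | succ c ih =>
    intro h1 h2
    rcases Nat.lt_or_ge b (c+1) with h | h
    · have hb : b ≤ c := by omega
      rw [dscW_peel s (le_trans h1 hb), dscW_peel s hb, ih h1 hb, mul_assoc]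
    · have hbc : b = c + 1 := by omega
      subst hbc
      rw [dscW_nil s (le_refl (c+1)), one_mul]

theorem dscW_single (a : ℕ) : dscW s a (a+1) = s a := by
  rw [dscW_peel s (le_refl a), dscW_nil s (le_refl a), mul_one]

section Rels

variable (n : ℕ)
variable (hb : ∀ i, i + 2 ≤ n → s i * s (i+1) * s i = s (i+1) * s i * s (i+1))
variable (hc : ∀ i j, i + 2 ≤ j → s i * s j = s j * s i)

include hc in
/-- `s j` commutes with `dscW s a b` when `b + 1 ≤ j`. -/
theorem comm_dscW_high (j : ℕ) : ∀ b a, b + 1 ≤ j → s j * dscW s a b = dscW s a b * s j := by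
  intro b
  induction b with
  | zero => intro a _; rw [dscW_nil s (Nat.zero_le a), mul_one, one_mul]
  | succ b ih =>
    intro a h
    by_cases hab : a ≤ b
    · rw [dscW_peel s hab, ← mul_assoc, ← hc b j (by omega), mul_assoc,
        ih a (by omega), mul_assoc]
    · rw [dscW_nil s (by omega), mul_one, one_mul]

include hc in
/-- `s j` commutes with `dscW s a b` when `j + 2 ≤ a`. -/
theorem comm_dscW_low (j : ℕ) : ∀ b a, j + 2 ≤ a → s j * dscW s a b = dscW s a b * s j := by
  intro b
  induction b with
  | zero => intro a _; rw [dscW_nil s (Nat.zero_le a), mul_one, one_mul]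
  | succ b ih =>
    intro a h
    by_cases hab : a ≤ b
    · rw [dscW_peel s hab, ← mul_assoc, hc j b (by omega), mul_assoc,
        ih a h, mul_assoc]
    · rw [dscW_nil s (by omega), mul_one, one_mul]

include hb hc in
/-- Key relation: `s i * δ_m = δ_m * s (i+1)` for `i + 2 ≤ m ≤ n`. -/
theorem conj1 (m i : ℕ) (h1 : i + 2 ≤ m) (h2 : m ≤ n) :
    s i * dscW s 0 m = dscW s 0 m * s (i+1) := by
  have e1 : dscW s 0 m = dscW s (i+2) m * (s (i+1) * (s i * dscW s 0 i)) := by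
    rw [dscW_split s 0 (i+2) m (by omega) h1,
      dscW_peel s (show (0:ℕ) ≤ i+1 by omega), dscW_peel s (show (0:ℕ) ≤ i by omega)]
  set X := dscW s (i+2) m with hXdef
  set Y := dscW s 0 i with hYdef
  have hX : s i * X = X * s i := comm_dscW_low s hc i m (i+2) (by omega)
  have hY : s (i+1) * Y = Y * s (i+1) := comm_dscW_high s hc (i+1) i 0 (by omega)
  have hbr : s i * s (i+1) * s i = s (i+1) * s i * s (i+1) := hb i (by omega)
  rw [e1]
  calc s i * (X * (s (i+1) * (s i * Y)))
      = X * (s i * s (i+1) * s i * Y) := by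
        rw [← mul_assoc (s i) X, hX]; simp only [mul_assoc]
    _ = X * (s (i+1) * s i * (s (i+1) * Y)) := by rw [hbr]; simp only [mul_assoc]
    _ = X * (s (i+1) * (s i * Y)) * s (i+1) := by rw [hY]; simp only [mul_assoc]

include hb hc in
/-- `dscW s a b * δ_m = δ_m * dscW s (a+1) (b+1)` for `b < m ≤ n`. -/
theorem conj_dscW (m : ℕ) (h2 : m ≤ n) :
    ∀ b a, b + 1 ≤ m → dscW s a b * dscW s 0 m = dscW s 0 m * dscW s (a+1) (b+1) := by
  intro b
  induction b with
  | zero =>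
    intro a _
    rw [dscW_nil s (Nat.zero_le a), dscW_nil s (by omega : (1:ℕ) ≤ a + 1), one_mul, mul_one]
  | succ b ih =>
    intro a h
    by_cases hab : a ≤ b
    · rw [dscW_peel s hab, dscW_peel s (by omega : a + 1 ≤ b + 1), mul_assoc,
        ih a (by omega), ← mul_assoc, conj1 s n hb hc m b (by omega) h2]
      simp only [mul_assoc]
    · rw [dscW_nil s (show b+1 ≤ a by omega),
        dscW_nil s (show b+1+1 ≤ a+1 by omega), one_mul, mul_one]

include hb hc in
/-- `ascW s a b * δ_m = δ_m * ascW s (a+1) (b+1)` for `b < m ≤ n`. -/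
theorem conj_ascW (m : ℕ) (h2 : m ≤ n) :
    ∀ b a, b + 1 ≤ m → ascW s a b * dscW s 0 m = dscW s 0 m * ascW s (a+1) (b+1) := by
  intro b
  induction b with
  | zero =>
    intro a _
    rw [ascW_nil s (Nat.zero_le a), ascW_nil s (by omega : (1:ℕ) ≤ a + 1), one_mul, mul_one]
  | succ b ih =>
    intro a h
    by_cases hab : a ≤ b
    · rw [ascW_peel s hab, ascW_peel s (by omega : a + 1 ≤ b + 1), mul_assoc,
        conj1 s n hb hc m b (by omega) h2, ← mul_assoc, ih a (by omega)]
      simp only [mul_assoc]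
    · rw [ascW_nil s (show b+1 ≤ a by omega),
        ascW_nil s (show b+1+1 ≤ a+1 by omega), one_mul, mul_one]

include hc in
/-- `s j` commutes with `DD s m` when `m + 1 ≤ j`. -/
theorem comm_DD (j : ℕ) : ∀ m, m + 1 ≤ j → s j * DD s m = DD s m * s j := by
  intro m
  induction m with
  | zero => intro _; show s j * 1 = 1 * s j; rw [mul_one, one_mul]
  | succ m ih =>
    intro h
    show s j * (DD s m * dscW s 0 (m+1)) = DD s m * dscW s 0 (m+1) * s j
    rw [← mul_assoc, ih (by omega), mul_assoc, comm_dscW_high s hc j (m+1) 0 (by omega),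
      mul_assoc]

include hb hc in
/-- Reversal: `DD s m * s i = s (m-1-i) * DD s m` for `i < m ≤ n`. -/
theorem rev : ∀ m, m ≤ n → ∀ i, i < m → DD s m * s i = s (m-1-i) * DD s m := by
  intro m
  induction m using Nat.strong_induction_on with
  | _ m ih =>
    match m with
    | 0 => intro _ i hi; omega
    | 1 =>
      intro _ i hi
      interval_cases i
      show 1 * dscW s 0 1 * s 0 = s 0 * (1 * dscW s 0 1)
      simp [dscW_single s 0]
    | (k+2) =>
      intro hm i hi
      rcases Nat.eq_zero_or_pos i with rfl | hipos
      · -- i = 0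
        have key : dscW s 0 (k+1) * dscW s 0 (k+2) * s 0
            = s (k+1) * (dscW s 0 (k+1) * dscW s 0 (k+2)) := by
          have e1 : dscW s 0 (k+1) * dscW s 0 (k+2)
              = dscW s 0 (k+2) * dscW s 1 (k+2) :=
            conj_dscW s n hb hc (k+2) hm (k+1) 0 (by omega)
          have e2 : dscW s 1 (k+2) * s 0 = dscW s 0 (k+2) := by
            rw [← dscW_single s 0]
            exact (dscW_split s 0 1 (k+2) (by omega) (by omega)).symm
          have e3 : dscW s 0 (k+2) = s (k+1) * dscW s 0 (k+1) :=
            dscW_peel s (by omega)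
          have lhs_eq : dscW s 0 (k+1) * dscW s 0 (k+2) * s 0
              = dscW s 0 (k+2) * dscW s 0 (k+2) := by rw [e1, mul_assoc, e2]
          have rhs_eq : s (k+1) * (dscW s 0 (k+1) * dscW s 0 (k+2))
              = dscW s 0 (k+2) * dscW s 0 (k+2) := by rw [← mul_assoc, ← e3]
          exact lhs_eq.trans rhs_eq.symm
        show DD s k * dscW s 0 (k+1) * dscW s 0 (k+2) * s 0
            = s (k+2-1-0) * (DD s k * dscW s 0 (k+1) * dscW s 0 (k+2))
        have hs : (k+2-1-0 : ℕ) = k+1 := by omega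
        rw [hs, mul_assoc, mul_assoc, ← mul_assoc (dscW s 0 (k+1)), key,
          ← mul_assoc, ← comm_DD s hc (k+1) k (by omega)]
        simp only [mul_assoc]
      · -- i ≥ 1
        obtain ⟨i', rfl⟩ : ∃ i', i = i' + 1 := ⟨i - 1, by omega⟩
        show DD s (k+1) * dscW s 0 (k+2) * s (i'+1)
            = s (k+2-1-(i'+1)) * (DD s (k+1) * dscW s 0 (k+2))
        have e1 : dscW s 0 (k+2) * s (i'+1) = s i' * dscW s 0 (k+2) :=
          (conj1 s n hb hc (k+2) i' (by omega) hm).symm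
        have e2 : DD s (k+1) * s i' = s (k+1-1-i') * DD s (k+1) :=
          ih (k+1) (by omega) (by omega) i' (by omega)
        have hs : (k+2-1-(i'+1) : ℕ) = k+1-1-i' := by omega
        rw [hs, mul_assoc, e1, ← mul_assoc, e2, mul_assoc]

include hb hc in
/-- `ascW s 0 m * DD s m = DD s m * δ_m` for `m ≤ n`. -/
theorem rev_asc (m : ℕ) (hm : m ≤ n) :
    ∀ b, b ≤ m → ascW s 0 b * DD s m = DD s m * dscW s (m-b) m := by
  intro b
  induction b with
  | zero =>
    intro _
    rw [ascW_nil s (le_refl 0), dscW_nil s (by omega : m ≤ m - 0), one_mul, mul_one]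
  | succ b ih =>
    intro h
    have hrev : s b * DD s m = DD s m * s (m-1-b) := by
      have h0 := rev s n hb hc m hm (m-1-b) (by omega)
      have hb' : m-1-(m-1-b) = b := by omega
      rw [hb'] at h0
      exact h0.symm
    rw [ascW_peel s (Nat.zero_le b), mul_assoc, hrev, ← mul_assoc, ih (by omega),
      mul_assoc]
    congr 1
    have e : dscW s (m-(b+1)) m = dscW s (m-b) m * s (m-(b+1)) := by
      have h1 := dscW_split s (m-(b+1)) (m-b) m (by omega) (by omega)
      rw [h1]
      congr 1
      have hmb : m - b = (m - (b+1)) + 1 := by omega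
      rw [hmb, dscW_single]
    rw [e]
    congr 2
    omega

end Rels
/-- Moving an element through a product, transforming each factor. -/
theorem prod_move (d : G) : ∀ (l : List ℕ) (f g : ℕ → G),
    (∀ x ∈ l, f x * d = d * g x) → (l.map f).prod * d = d * (l.map g).prod := by
  intro l
  induction l with
  | nil => intro f g _; simp
  | cons a t ih =>
    intro f g h
    simp only [List.map_cons, List.prod_cons, mul_assoc]
    rw [ih f g (fun x hx => h x (List.mem_cons_of_mem a hx)),
      ← mul_assoc, h a List.mem_cons_self, mul_assoc]

theorem dscW_eq_list : ∀ b a, dscW s a b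
    = ((List.range (b-a)).map (fun j => s (b-1-j))).prod := by
  intro b
  induction b with
  | zero => intro a; simp [dscW]
  | succ b ih =>
    intro a
    by_cases hab : a ≤ b
    · have h1 : b + 1 - a = (b - a) + 1 := by omega
      rw [dscW_peel s hab, h1, List.range_succ_eq_map, List.map_cons, List.prod_cons,
        List.map_map, ih a]
      have hf : ∀ j ∈ List.range (b - a),
          ((fun j => s (b+1-1-j)) ∘ Nat.succ) j = (fun j => s (b-1-j)) j := by
        intro j _
        show s (b + 1 - 1 - Nat.succ j) = s (b - 1 - j)
        congr 1
        omega
      rw [List.map_congr_left hf]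
      norm_num
    · have h1 : b + 1 - a = 0 := by omega
      rw [dscW_nil s (by omega), h1]
      simp

theorem ascW_eq_list : ∀ b a, ascW s a b
    = ((List.range (b-a)).map (fun j => s (a+j))).prod := by
  intro b
  induction b with
  | zero => intro a; simp [ascW]
  | succ b ih =>
    intro a
    by_cases hab : a ≤ b
    · have h1 : b + 1 - a = (b - a) + 1 := by omega
      rw [ascW_peel s hab, h1, List.range_succ, List.map_append, List.prod_append,
        ih a]
      simp only [List.map_cons, List.map_nil, List.prod_cons, List.prod_nil, mul_one]
      rw [show a + (b - a) = b by omega]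
    · have h1 : b + 1 - a = 0 := by omega
      rw [ascW_nil s (by omega), h1]
      simp

section Main

variable (n : ℕ)
variable (hb : ∀ i, i + 2 ≤ n → s i * s (i+1) * s i = s (i+1) * s i * s (i+1))
variable (hc : ∀ i j, i + 2 ≤ j → s i * s j = s j * s i)

include hb hc in
theorem prod_dscW_eq_DD : ∀ m, m ≤ n →
    ((List.range m).map (fun k => dscW s k m)).prod = DD s m := by
  intro m
  induction m with
  | zero => intro _; simp [DD]
  | succ m ih =>
    intro h
    have hmove : ((List.range m).map (fun k => dscW s k m)).prod * dscW s 0 (m+1)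
        = dscW s 0 (m+1) * ((List.range m).map (fun k => dscW s (k+1) (m+1))).prod := by
      apply prod_move
      intro k _
      exact conj_dscW s n hb hc (m+1) h m k (le_refl (m+1))
    have hsplit : ((List.range (m+1)).map (fun k => dscW s k (m+1))).prod
        = dscW s 0 (m+1) * ((List.range m).map (fun k => dscW s (k+1) (m+1))).prod := by
      rw [List.range_succ_eq_map, List.map_cons, List.prod_cons, List.map_map]
      rfl
    rw [hsplit, ← hmove, ih (by omega)]
    rfl

theorem conj4 (d A x B A' x' B' : G) (hA : A * d = d * A') (hx : x * d = d * x')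
    (hB : B * d = d * B') : A * x * x * B * d = d * (A' * x' * x' * B') := by
  have eA : A = d * A' * d⁻¹ := by rw [← hA]; group
  have ex : x = d * x' * d⁻¹ := by rw [← hx]; group
  have eB : B = d * B' * d⁻¹ := by rw [← hB]; group
  rw [eA, ex, eB]
  group

include hb hc in
theorem main_sq : ∀ m, m ≤ n →
    (DD s m) * (DD s m) = ((List.range m).map (Rfac s m)).prod := by
  intro m
  induction m with
  | zero => intro _; simp [DD]
  | succ m ih =>
    intro h
    have hmove : ∀ k ∈ List.range m, Rfac s m k * dscW s 0 (m+1)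
        = dscW s 0 (m+1) * Rfac s (m+1) (k+1) := by
      intro k hk
      have hkm : k < m := List.mem_range.mp hk
      have hA : ascW s k (m-1) * dscW s 0 (m+1) = dscW s 0 (m+1) * ascW s (k+1) m := by
        have h0 := conj_ascW s n hb hc (m+1) h (m-1) k (by omega)
        rwa [show m-1+1 = m by omega] at h0
      have hx : s (m-1) * dscW s 0 (m+1) = dscW s 0 (m+1) * s m := by
        have h0 := conj1 s n hb hc (m+1) (m-1) (by omega) h
        rwa [show m-1+1 = m by omega] at h0
      have hB : dscW s k (m-1) * dscW s 0 (m+1) = dscW s 0 (m+1) * dscW s (k+1) m := by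
        have h0 := conj_dscW s n hb hc (m+1) h (m-1) k (by omega)
        rwa [show m-1+1 = m by omega] at h0
      have h4 := conj4 (dscW s 0 (m+1)) _ _ _ _ _ _ hA hx hB
      show ascW s k (m-1) * s (m-1) * s (m-1) * dscW s k (m-1) * dscW s 0 (m+1)
          = dscW s 0 (m+1) * (ascW s (k+1) (m+1-1) * s (m+1-1) * s (m+1-1) *
              dscW s (k+1) (m+1-1))
      have hm1 : m + 1 - 1 = m := rfl
      rw [hm1]
      exact h4
    have move := prod_move (dscW s 0 (m+1)) (List.range m) (Rfac s m)
      (fun k => Rfac s (m+1) (k+1)) hmove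
    have hasc : ascW s 0 (m+1) * DD s m = DD s m * dscW s 0 (m+1) := by
      have h0 := rev_asc s n hb hc (m+1) h (m+1) (le_refl _)
      rw [show m+1-(m+1) = 0 by omega] at h0
      have h1 : ascW s 0 (m+1) * (DD s m * dscW s 0 (m+1))
          = (DD s m * dscW s 0 (m+1)) * dscW s 0 (m+1) := h0
      have h2 : (ascW s 0 (m+1) * DD s m) * dscW s 0 (m+1)
          = (DD s m * dscW s 0 (m+1)) * dscW s 0 (m+1) := by
        rw [mul_assoc]; exact h1
      exact mul_right_cancel h2
    have hR0 : Rfac s (m+1) 0 = ascW s 0 (m+1) * dscW s 0 (m+1) := by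
      show ascW s 0 (m+1-1) * s (m+1-1) * s (m+1-1) * dscW s 0 (m+1-1) = _
      have hm1 : m + 1 - 1 = m := rfl
      rw [hm1, ascW_peel s (Nat.zero_le m), dscW_peel s (Nat.zero_le m)]
      simp only [mul_assoc]
    have hsplit : ((List.range (m+1)).map (Rfac s (m+1))).prod
        = Rfac s (m+1) 0 * ((List.range m).map (fun k => Rfac s (m+1) (k+1))).prod := by
      rw [List.range_succ_eq_map, List.map_cons, List.prod_cons, List.map_map]
      rfl
    show (DD s m * dscW s 0 (m+1)) * (DD s m * dscW s 0 (m+1)) = _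
    rw [hsplit]
    calc (DD s m * dscW s 0 (m+1)) * (DD s m * dscW s 0 (m+1))
        = (ascW s 0 (m+1) * DD s m) * (DD s m * dscW s 0 (m+1)) := by rw [hasc]
      _ = ascW s 0 (m+1) * (DD s m * DD s m * dscW s 0 (m+1)) := by
          simp only [mul_assoc]
      _ = ascW s 0 (m+1) * (((List.range m).map (Rfac s m)).prod * dscW s 0 (m+1)) := by
          rw [ih (by omega)]
      _ = ascW s 0 (m+1) * (dscW s 0 (m+1) *
            ((List.range m).map (fun k => Rfac s (m+1) (k+1))).prod) := by rw [move]
      _ = (ascW s 0 (m+1) * dscW s 0 (m+1)) *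
            ((List.range m).map (fun k => Rfac s (m+1) (k+1))).prod := by
          simp only [mul_assoc]
      _ = Rfac s (m+1) 0 *
            ((List.range m).map (fun k => Rfac s (m+1) (k+1))).prod := by rw [hR0]

end Main


end GarsideAux

section ArtinARels

theorem gA_braid (n i : ℕ) (h : i + 2 ≤ n) :
    gA n i * gA n (i+1) * gA n i = gA n (i+1) * gA n i * gA n (i+1) := by
  have hi : i < n := by omega
  have hj : i + 1 < n := by omega
  have hr : braidRel (FreeGroup.of (⟨i, hi⟩ : Fin n)) (FreeGroup.of (⟨i+1, hj⟩ : Fin n))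
      ∈ ArelA n := ⟨⟨i, hi⟩, ⟨i+1, hj⟩, Or.inl ⟨rfl, rfl⟩⟩
  have h1 : PresentedGroup.mk (ArelA n)
      (braidRel (FreeGroup.of ⟨i, hi⟩) (FreeGroup.of ⟨i+1, hj⟩)) = 1 :=
    (QuotientGroup.eq_one_iff _).mpr (Subgroup.subset_normalClosure hr)
  unfold braidRel at h1
  simp only [map_mul, map_inv] at h1
  rw [mul_inv_eq_one] at h1
  simp only [gA, dif_pos hi, dif_pos hj]
  exact h1

theorem gA_comm (n i j : ℕ) (h : i + 2 ≤ j) :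
    gA n i * gA n j = gA n j * gA n i := by
  by_cases hj : j < n
  · have hi : i < n := by omega
    have hr : commRel (FreeGroup.of (⟨i, hi⟩ : Fin n)) (FreeGroup.of (⟨j, hj⟩ : Fin n))
        ∈ ArelA n := ⟨⟨i, hi⟩, ⟨j, hj⟩, Or.inr ⟨h, rfl⟩⟩
    have h1 : PresentedGroup.mk (ArelA n)
        (commRel (FreeGroup.of ⟨i, hi⟩) (FreeGroup.of ⟨j, hj⟩)) = 1 :=
      (QuotientGroup.eq_one_iff _).mpr (Subgroup.subset_normalClosure hr)
    unfold commRel at h1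
    simp only [map_mul, map_inv] at h1
    rw [mul_inv_eq_one] at h1
    simp only [gA, dif_pos hi, dif_pos hj]
    exact h1
  · simp only [gA, dif_neg hj, mul_one, one_mul]

end ArtinARels

/-- (Lemma 5.1 / A5) In the braid group on `n+1` strands (Artin group of type `A_n`
with standard generators `s_1, …, s_n`), the square of the Garside element satisfies
`Δ[A_n]² = (s_1 ⋯ s_{n-1} s_n² s_{n-1} ⋯ s_1) ⋯ (s_{n-1} s_n² s_{n-1}) s_n²`. -/
theorem garside_sq_of_typeA (n : ℕ) (hn : 1 ≤ n) :
    (deltaA n) ^ 2 =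
      ((List.range n).map (fun k =>
        ((List.range (n - 1 - k)).map (fun j => gA n (k + j))).prod *
          gA n (n - 1) * gA n (n - 1) *
        ((List.range (n - 1 - k)).map (fun j => gA n (n - 2 - j))).prod)).prod := by
  have hb : ∀ i, i + 2 ≤ n →
      gA n i * gA n (i+1) * gA n i = gA n (i+1) * gA n i * gA n (i+1) :=
    fun i h => gA_braid n i h
  have hc : ∀ i j, i + 2 ≤ j → gA n i * gA n j = gA n j * gA n i :=
    fun i j h => gA_comm n i j h
  have hdelta : deltaA n = GarsideAux.DD (gA n) n := by
    have he : deltaAin n (gA n)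
        = ((List.range n).map (fun k => GarsideAux.dscW (gA n) k n)).prod := by
      unfold deltaAin
      congr 1
      apply List.map_congr_left
      intro k _
      exact (GarsideAux.dscW_eq_list (gA n) n k).symm
    rw [deltaA, he, GarsideAux.prod_dscW_eq_DD (gA n) n hb hc n (le_refl n)]
  have hmain := GarsideAux.main_sq (gA n) n hb hc n (le_refl n)
  have hR : ((List.range n).map (GarsideAux.Rfac (gA n) n)).prod
      = ((List.range n).map (fun k =>
        ((List.range (n - 1 - k)).map (fun j => gA n (k + j))).prod *
          gA n (n - 1) * gA n (n - 1) *
        ((List.range (n - 1 - k)).map (fun j => gA n (n - 2 - j))).prod)).prod := by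
    congr 1
    apply List.map_congr_left
    intro k _
    show GarsideAux.ascW (gA n) k (n-1) * gA n (n-1) * gA n (n-1) *
        GarsideAux.dscW (gA n) k (n-1) = _
    rw [GarsideAux.ascW_eq_list (gA n) (n-1) k, GarsideAux.dscW_eq_list (gA n) (n-1) k]
    congr 1
  rw [pow_two, hdelta, hmain, hR]
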